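/- Let m ≥ 1 and let C_a ≥ 0, C_w ≥ 0. Then there exists a constant C̃ ≥ 0 such that for every M = (a_0, …, a_{m−1}) ∈ ℂ^m with |a_j| ≤ C_a for all j, every N = (w^0, …, w^{m−1}) ∈ ℂ^m with |w^j| ≤ C_w for all j, and every solution w of the Cauchy problem with coefficients M and initial data N, one has |w^{(i)}(ξ)| ≤ C̃ (1 + ξ^{m−1}) e^{Λ̄_m(M) ξ} for all i ∈ {0, …, m−1} and all ξ ≥ 0. -/

import Mathlib

open Polynomial

/-- The characteristic polynomial `λ^m - a_{m-1} λ^{m-1} - ⋯ - a_1 λ - a_0`. -/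
noncomputable def charPoly (m : ℕ) (M : Fin m → ℂ) : Polynomial ℂ :=
  X ^ m - ∑ j : Fin m, C (M j) * X ^ (j : ℕ)

/-- `Λ̄_m(M)`: the maximum of the real parts of the roots of `charPoly m M`. -/
noncomputable def maxReRoots (m : ℕ) (M : Fin m → ℂ) : ℝ :=
  sSup (Complex.re '' {z : ℂ | z ∈ (charPoly m M).roots})

/-- `w` is a solution of the Cauchy problem with coefficients `M = (a_0, …, a_{m-1})`
and initial data `N = (w^0, …, w^{m-1})`: it is `m` times differentiable, satisfies
`w^{(m)}(ξ) = a_{m-1} w^{(m-1)}(ξ) + ⋯ + a_0 w(ξ)` for `ξ ≥ 0`, and `w^{(j)}(0) = w^j`. -/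
def IsCauchySolution (m : ℕ) (M N : Fin m → ℂ) (w : ℝ → ℂ) : Prop :=
  (∀ i < m, Differentiable ℝ (iteratedDeriv i w)) ∧
  (∀ ξ : ℝ, 0 ≤ ξ → iteratedDeriv m w ξ = ∑ j : Fin m, M j * iteratedDeriv (j : ℕ) w ξ) ∧
  (∀ j : Fin m, iteratedDeriv (j : ℕ) w 0 = N j)

/-! ### Polynomial lemmas -/

lemma charPoly_sum_degree_lt (m : ℕ) (M : Fin m → ℂ) :
    (∑ j : Fin m, C (M j) * X ^ (j : ℕ)).degree < (m : WithBot ℕ) := by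
  apply lt_of_le_of_lt (degree_sum_le _ _)
  rw [Finset.sup_lt_iff (by exact_mod_cast WithBot.bot_lt_coe _)]
  intro j _
  apply lt_of_le_of_lt (degree_C_mul_X_pow_le _ _)
  exact_mod_cast j.isLt

lemma charPoly_coeff (m : ℕ) (M : Fin m → ℂ) (k : ℕ) :
    (charPoly m M).coeff k =
      (if k = m then 1 else 0) - (if h : k < m then M ⟨k, h⟩ else 0) := by
  rw [charPoly, coeff_sub, coeff_X_pow]
  congr 1
  rw [finset_sum_coeff]
  simp only [coeff_C_mul, coeff_X_pow, mul_ite, mul_one, mul_zero]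
  by_cases h : k < m
  · rw [Finset.sum_eq_single (⟨k, h⟩ : Fin m)]
    · simp [h]
    · intro b _ hb
      simp only [ite_eq_right_iff]
      intro hbk
      exact absurd (Fin.ext hbk.symm) hb
    · simp
  · rw [Finset.sum_eq_zero, dif_neg h]
    intro b _
    rw [if_neg]
    intro hbk
    exact h (hbk ▸ b.isLt)

lemma charPoly_monic (m : ℕ) (hm : 1 ≤ m) (M : Fin m → ℂ) : (charPoly m M).Monic := by
  obtain ⟨n, rfl⟩ := Nat.exists_eq_add_of_le hm
  exact monic_X_pow_sub (charPoly_sum_degree_lt _ M)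

lemma charPoly_natDegree (m : ℕ) (hm : 1 ≤ m) (M : Fin m → ℂ) :
    (charPoly m M).natDegree = m := by
  have hd : (∑ j : Fin m, C (M j) * X ^ (j : ℕ)).degree < (X ^ m : Polynomial ℂ).degree := by
    rw [degree_X_pow]; exact charPoly_sum_degree_lt m M
  have := degree_sub_eq_left_of_degree_lt hd
  rw [degree_X_pow] at this
  rw [charPoly]
  exact natDegree_eq_of_degree_eq_some this

lemma eq_charPoly_of_monic {n : ℕ} {Q : Polynomial ℂ} (hQ : Q.Monic) (hd : Q.natDegree = n) :
    Q = charPoly n (fun j => -(Q.coeff j)) := by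
  ext k
  rw [charPoly_coeff]
  by_cases hk : k < n
  · simp [hk, hk.ne]
  · by_cases hk' : k = n
    · subst hk'
      simp only [if_pos rfl, dif_neg hk, sub_zero]
      rw [← hd]
      exact hQ.coeff_natDegree
    · have : n < k := lt_of_le_of_ne (not_lt.1 hk) (Ne.symm hk')
      rw [coeff_eq_zero_of_natDegree_lt (hd ▸ this)]
      simp [hk', hk]

/-! ### Root lemmas -/

lemma rootSet_finite (m : ℕ) (M : Fin m → ℂ) :
    {z : ℂ | z ∈ (charPoly m M).roots}.Finite := by
  apply Set.Finite.ofFinset (charPoly m M).roots.toFinset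
  intro z
  simp [Multiset.mem_toFinset]

lemma rootSet_nonempty (m : ℕ) (hm : 1 ≤ m) (M : Fin m → ℂ) :
    {z : ℂ | z ∈ (charPoly m M).roots}.Nonempty := by
  obtain ⟨z, hz⟩ := Complex.exists_root (f := charPoly m M) (by
    rw [degree_eq_natDegree (charPoly_monic m hm M).ne_zero, charPoly_natDegree m hm M]
    exact_mod_cast hm)
  exact ⟨z, by rw [Set.mem_setOf_eq, mem_roots (charPoly_monic m hm M).ne_zero]; exact hz⟩

lemma exists_max_root (m : ℕ) (hm : 1 ≤ m) (M : Fin m → ℂ) :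
    ∃ z : ℂ, z ∈ (charPoly m M).roots ∧ z.re = maxReRoots m M ∧
      ∀ y : ℂ, y ∈ (charPoly m M).roots → y.re ≤ maxReRoots m M := by
  have hfin := (rootSet_finite m M).image Complex.re
  have hne := (rootSet_nonempty m hm M).image Complex.re
  obtain ⟨z, hz, hzre⟩ := hne.csSup_mem hfin
  exact ⟨z, hz, hzre, fun y hy => le_csSup hfin.bddAbove ⟨y, hy, rfl⟩⟩

lemma root_norm_le {m : ℕ} (hm : 1 ≤ m) {M : Fin m → ℂ} {Ca : ℝ} (hM : ∀ j, ‖M j‖ ≤ Ca)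
    {z : ℂ} (hz : z ∈ (charPoly m M).roots) : ‖z‖ ≤ max 1 (m * Ca) := by
  have hroot : (charPoly m M).eval z = 0 := (mem_roots'.1 hz).2
  have heval : z ^ m = ∑ j : Fin m, M j * z ^ (j : ℕ) := by
    rw [charPoly, eval_sub, eval_pow, eval_X, eval_finset_sum] at hroot
    simp only [eval_mul, eval_C, eval_pow, eval_X] at hroot
    exact sub_eq_zero.1 hroot
  rcases le_or_gt ‖z‖ 1 with h1 | h1
  · exact h1.trans (le_max_left _ _)
  have hCa : 0 ≤ Ca := le_trans (norm_nonneg _) (hM ⟨0, by omega⟩)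
  have key : ‖z‖ ^ m ≤ (m * Ca) * ‖z‖ ^ (m - 1) := by
    calc ‖z‖ ^ m = ‖z ^ m‖ := (norm_pow _ _).symm
    _ = ‖∑ j : Fin m, M j * z ^ (j : ℕ)‖ := by rw [heval]
    _ ≤ ∑ j : Fin m, ‖M j * z ^ (j : ℕ)‖ := norm_sum_le _ _
    _ ≤ ∑ _j : Fin m, Ca * ‖z‖ ^ (m - 1) := by
        apply Finset.sum_le_sum
        intro j _
        rw [norm_mul, norm_pow]
        exact mul_le_mul (hM j) (pow_le_pow_right₀ h1.le (by omega)) (by positivity) hCa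
    _ = (m * Ca) * ‖z‖ ^ (m - 1) := by
        rw [Finset.sum_const, Finset.card_univ, Fintype.card_fin, nsmul_eq_mul]; ring
  have hpow : ‖z‖ ^ m = ‖z‖ * ‖z‖ ^ (m - 1) := by
    rw [← pow_succ']
    congr 1
    omega
  rw [hpow] at key
  have hzpow : (0:ℝ) < ‖z‖ ^ (m - 1) := by positivity
  have : ‖z‖ ≤ m * Ca := by
    rw [← mul_le_mul_iff_of_pos_right hzpow]
    exact key
  exact this.trans (le_max_right _ _)

/-! ### Factorization -/

lemma factor_of_root {P : Polynomial ℂ} {lam : ℂ} {n : ℕ} (hP : P.Monic)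
    (hdeg : P.natDegree = n + 1) (hroot : P.IsRoot lam) :
    ∃ Q : Polynomial ℂ, P = (X - C lam) * Q ∧ Q.Monic ∧ Q.natDegree = n := by
  obtain ⟨Q, hQ⟩ := (dvd_iff_isRoot).2 hroot
  have hQm : Q.Monic := by
    have := hP
    rw [hQ] at this
    exact (monic_X_sub_C lam).of_mul_monic_left this
  refine ⟨Q, hQ, hQm, ?_⟩
  have := hdeg
  rw [hQ, natDegree_mul (X_sub_C_ne_zero lam) hQm.ne_zero, natDegree_X_sub_C] at this
  omega

lemma coeff_rel {P Q : Polynomial ℂ} {lam : ℂ} (hQ : P = (X - C lam) * Q) (k : ℕ) :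
    P.coeff (k + 1) = Q.coeff k - lam * Q.coeff (k + 1) := by
  rw [hQ, sub_mul, coeff_sub, coeff_X_mul, coeff_C_mul]

lemma coeff_rel0 {P Q : Polynomial ℂ} {lam : ℂ} (hQ : P = (X - C lam) * Q) :
    P.coeff 0 = - (lam * Q.coeff 0) := by
  rw [hQ, sub_mul, coeff_sub, coeff_C_mul, mul_coeff_zero, coeff_X_zero, zero_mul, zero_sub]

lemma coeff_bound {P Q : Polynomial ℂ} {lam : ℂ} {n : ℕ} {Ca L : ℝ} (hCa : 0 ≤ Ca) (hL : 0 ≤ L)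
    (hQ : P = (X - C lam) * Q) (hQm : Q.Monic) (hQd : Q.natDegree = n)
    (hPc : ∀ k, k < n + 1 → ‖P.coeff (k + 1)‖ ≤ Ca)
    (hlam : ‖lam‖ ≤ L) :
    ∀ k, ‖Q.coeff k‖ ≤ (Ca + 1) * (L + 1) ^ n := by
  have key : ∀ d k, k + d = n → ‖Q.coeff k‖ ≤ (Ca + 1) * (L + 1) ^ d := by
    intro d
    induction d with
    | zero =>
      intro k hk
      simp only [Nat.add_zero] at hk
      subst hk
      rw [← hQd, hQm.coeff_natDegree]
      simp
      nlinarith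
    | succ d ih =>
      intro k hk
      have hQk : Q.coeff k = P.coeff (k + 1) + lam * Q.coeff (k + 1) := by
        rw [coeff_rel hQ k]; ring
      have h1 : ‖Q.coeff (k + 1)‖ ≤ (Ca + 1) * (L + 1) ^ d := ih (k + 1) (by omega)
      have h2 : ‖P.coeff (k + 1)‖ ≤ Ca := hPc k (by omega)
      have h3 : (1:ℝ) ≤ (L + 1) ^ d := one_le_pow₀ (by linarith)
      calc ‖Q.coeff k‖ ≤ ‖P.coeff (k + 1)‖ + ‖lam * Q.coeff (k + 1)‖ := by
            rw [hQk]; exact norm_add_le _ _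
      _ ≤ Ca + L * ((Ca + 1) * (L + 1) ^ d) := by
            rw [norm_mul]
            have := mul_le_mul hlam h1 (norm_nonneg _) hL
            linarith
      _ ≤ (Ca + 1) * (L + 1) ^ (d + 1) := by
            rw [pow_succ]
            nlinarith
  intro k
  rcases le_or_gt k n with h | h
  · exact (key (n - k) k (by omega)).trans
      (mul_le_mul_of_nonneg_left (pow_le_pow_right₀ (by linarith) (by omega)) (by linarith))
  · rw [coeff_eq_zero_of_natDegree_lt (by omega)]
    simp only [norm_zero]
    positivity

/-! ### The algebraic ODE identity -/

lemma ode_identity (n : ℕ) (p q : ℕ → ℂ) (lam : ℂ) (c : ℕ → ℂ)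
    (hrel : ∀ k, p (k + 1) = q k - lam * q (k + 1))
    (hrel0 : p 0 = -(lam * q 0)) (hqn : q n = 1) :
    (∑ k ∈ Finset.range (n + 1), -(p k) * c k) - lam * c n =
      ∑ k ∈ Finset.range n, -(q k) * (c (k + 1) - lam * c k) := by
  have e1 : ∑ k ∈ Finset.range (n + 1), -(p k) * c k
      = (∑ k ∈ Finset.range n, -(p (k + 1)) * c (k + 1)) + -(p 0) * c 0 :=
    Finset.sum_range_succ' _ n
  have e2 : ∑ k ∈ Finset.range n, -(p (k + 1)) * c (k + 1)
      = lam * (∑ k ∈ Finset.range n, q (k + 1) * c (k + 1))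
        - ∑ k ∈ Finset.range n, q k * c (k + 1) := by
    rw [Finset.mul_sum, ← Finset.sum_sub_distrib]
    apply Finset.sum_congr rfl
    intro k _
    rw [hrel]; ring
  have e4 : ∑ k ∈ Finset.range n, q (k + 1) * c (k + 1)
      = (∑ k ∈ Finset.range (n + 1), q k * c k) - q 0 * c 0 := by
    rw [Finset.sum_range_succ' (fun k => q k * c k) n]; ring
  have e5 : ∑ k ∈ Finset.range (n + 1), q k * c k
      = (∑ k ∈ Finset.range n, q k * c k) + c n := by
    rw [Finset.sum_range_succ, hqn]; ring
  have e6 : ∑ k ∈ Finset.range n, -(q k) * (c (k + 1) - lam * c k)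
      = lam * (∑ k ∈ Finset.range n, q k * c k)
        - ∑ k ∈ Finset.range n, q k * c (k + 1) := by
    rw [Finset.mul_sum, ← Finset.sum_sub_distrib]
    apply Finset.sum_congr rfl
    intro k _
    ring
  rw [e1, e2, e4, e5, hrel0, e6]
  ring

/-! ### Analytic lemmas -/

lemma expBound {lam : ℂ} {v u : ℝ → ℂ} (hv : Differentiable ℝ v) (hu : Continuous u)
    (hode : ∀ s : ℝ, 0 ≤ s → deriv v s = lam * v s + u s) {ξ : ℝ} (hξ : 0 ≤ ξ) :
    ‖v ξ‖ ≤ Real.exp (lam.re * ξ) *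
      (‖v 0‖ + ∫ s in (0:ℝ)..ξ, Real.exp (-lam.re * s) * ‖u s‖) := by
  set g : ℝ → ℂ := fun s => Complex.exp (-lam * s) * v s with hg
  have hderiv : ∀ s ∈ Set.uIcc (0:ℝ) ξ, HasDerivAt g (Complex.exp (-lam * s) * u s) s := by
    intro s hs
    rw [Set.uIcc_of_le hξ] at hs
    have hs0 : (0:ℝ) ≤ s := hs.1
    have he : HasDerivAt (fun t : ℝ => Complex.exp (-lam * t))
        (-lam * Complex.exp (-lam * s)) s := by
      have h1 : HasDerivAt (fun z : ℂ => Complex.exp (-lam * z))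
          (-lam * Complex.exp (-lam * (s:ℂ))) (s:ℂ) := by
        simpa [mul_comm] using ((hasDerivAt_id (s:ℂ)).const_mul (-lam)).cexp
      exact h1.comp_ofReal
    have hvs : HasDerivAt v (deriv v s) s := (hv s).hasDerivAt
    have := he.mul hvs
    have h2 : -lam * Complex.exp (-lam * s) * v s + Complex.exp (-lam * s) * deriv v s
        = Complex.exp (-lam * s) * u s := by
      rw [hode s hs0]; ring
    rw [h2] at this
    exact this
  have hcont : Continuous fun s : ℝ => Complex.exp (-lam * s) * u s :=
    (Continuous.cexp (by continuity)).mul hu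
  have hFTC := intervalIntegral.integral_eq_sub_of_hasDerivAt hderiv
    (hcont.intervalIntegrable 0 ξ)
  have hgξ : g ξ = g 0 + ∫ s in (0:ℝ)..ξ, Complex.exp (-lam * s) * u s := by
    rw [hFTC]; ring
  have hvξ : v ξ = Complex.exp (lam * ξ) * g ξ := by
    rw [hg]
    simp only []
    rw [← mul_assoc, ← Complex.exp_add]
    norm_num
  rw [hvξ, norm_mul, Complex.norm_exp]
  have hre : (lam * (ξ:ℂ)).re = lam.re * ξ := by simp [Complex.mul_re]
  rw [hre]
  apply mul_le_mul_of_nonneg_left _ (Real.exp_nonneg _)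
  rw [hgξ]
  have hg0 : g 0 = v 0 := by simp [hg]
  calc ‖g 0 + ∫ s in (0:ℝ)..ξ, Complex.exp (-lam * s) * u s‖
      ≤ ‖g 0‖ + ‖∫ s in (0:ℝ)..ξ, Complex.exp (-lam * s) * u s‖ := norm_add_le _ _
    _ ≤ ‖v 0‖ + ∫ s in (0:ℝ)..ξ, Real.exp (-lam.re * s) * ‖u s‖ := by
        rw [hg0]
        gcongr
        calc ‖∫ s in (0:ℝ)..ξ, Complex.exp (-lam * s) * u s‖
            ≤ ∫ s in (0:ℝ)..ξ, ‖Complex.exp (-lam * s) * u s‖ :=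
              intervalIntegral.norm_integral_le_integral_norm hξ
          _ = ∫ s in (0:ℝ)..ξ, Real.exp (-lam.re * s) * ‖u s‖ := by
              apply intervalIntegral.integral_congr
              intro s _
              simp only [norm_mul, Complex.norm_exp]
              congr 2
              simp [Complex.mul_re]

lemma iteratedDeriv_shift {m : ℕ} {w : ℝ → ℂ}
    (hw : ∀ i < m, Differentiable ℝ (iteratedDeriv i w)) (lam : ℂ) :
    ∀ j, j + 1 ≤ m →
      iteratedDeriv j (fun t => deriv w t - lam * w t) =
        fun t => iteratedDeriv (j + 1) w t - lam * iteratedDeriv j w t := by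
  intro j
  induction j with
  | zero =>
    intro _
    funext t
    simp [iteratedDeriv_one]
  | succ j ih =>
    intro hj
    rw [iteratedDeriv_succ, ih (by omega)]
    funext t
    have h1 : Differentiable ℝ (iteratedDeriv (j + 1) w) := hw (j + 1) (by omega)
    have h2 : Differentiable ℝ (iteratedDeriv j w) := hw j (by omega)
    rw [deriv_fun_sub (h1 t) ((h2 t).const_mul lam), deriv_const_mul lam (h2 t),
      ← iteratedDeriv_succ, ← iteratedDeriv_succ]

lemma pow_le_one_add_pow {x : ℝ} (hx : 0 ≤ x) {a b : ℕ} (hab : a ≤ b) :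
    x ^ a ≤ 1 + x ^ b := by
  rcases le_or_gt x 1 with h | h
  · have : x ^ a ≤ 1 := pow_le_one₀ hx h
    have : (0:ℝ) ≤ x ^ b := by positivity
    linarith
  · have : x ^ a ≤ x ^ b := pow_le_pow_right₀ h.le hab
    linarith


lemma base_case (Ca Cw : ℝ) (hCa : 0 ≤ Ca) (hCw : 0 ≤ Cw) :
    ∃ Ct : ℝ, 0 ≤ Ct ∧
      ∀ (M N : Fin 1 → ℂ), (∀ j, ‖M j‖ ≤ Ca) → (∀ j, ‖N j‖ ≤ Cw) →
        ∀ w : ℝ → ℂ, IsCauchySolution 1 M N w →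
          ∀ i < 1, ∀ ξ : ℝ, 0 ≤ ξ →
            ‖iteratedDeriv i w ξ‖ ≤ Ct * (1 + ξ ^ (1 - 1)) * Real.exp (maxReRoots 1 M * ξ) := by
  refine ⟨Cw, hCw, ?_⟩
  intro M N hM hN w hw i hi ξ hξ
  have hi0 : i = 0 := by omega
  subst hi0
  rw [iteratedDeriv_zero]
  have hmax : maxReRoots 1 M = (M 0).re := by
    have hP : charPoly 1 M = X - C (M 0) := by
      rw [charPoly, Fin.sum_univ_one]
      simp
    rw [maxReRoots, hP, roots_X_sub_C]
    have : {z : ℂ | z ∈ ({M 0} : Multiset ℂ)} = {M 0} := by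
      ext z; simp
    rw [this, Set.image_singleton, csSup_singleton]
  have hv : Differentiable ℝ w := by
    have := hw.1 0 Nat.one_pos
    rwa [iteratedDeriv_zero] at this
  have hode : ∀ s : ℝ, 0 ≤ s → deriv w s = M 0 * w s + (fun _ : ℝ => (0:ℂ)) s := by
    intro s hs
    have := hw.2.1 s hs
    rw [iteratedDeriv_one, Fin.sum_univ_one] at this
    simpa [iteratedDeriv_zero] using this
  have hb := expBound hv continuous_const hode hξ
  have hint : (∫ s in (0:ℝ)..ξ, Real.exp (-(M 0).re * s) * ‖(fun _ : ℝ => (0:ℂ)) s‖) = 0 := by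
    simp
  rw [hint] at hb
  have hw0 : ‖w 0‖ ≤ Cw := by
    have := hw.2.2 0
    simp only [Fin.val_zero, iteratedDeriv_zero] at this
    rw [this]
    exact hN 0
  rw [hmax]
  have hexp : (0:ℝ) ≤ Real.exp ((M 0).re * ξ) := Real.exp_nonneg _
  calc ‖w ξ‖ ≤ Real.exp ((M 0).re * ξ) * (‖w 0‖ + 0) := hb
    _ ≤ Cw * (1 + ξ ^ (1 - 1)) * Real.exp ((M 0).re * ξ) := by
        have h1 : (1:ℝ) + ξ ^ (1 - 1) = 2 := by norm_num
        rw [h1, add_zero]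
        nlinarith [hw0, hexp]

set_option maxHeartbeats 1000000 in
lemma step_case (n : ℕ) (hn : 1 ≤ n)
    (IH : ∀ Ca Cw : ℝ, 0 ≤ Ca → 0 ≤ Cw →
      ∃ Ct : ℝ, 0 ≤ Ct ∧
        ∀ (M N : Fin n → ℂ), (∀ j, ‖M j‖ ≤ Ca) → (∀ j, ‖N j‖ ≤ Cw) →
          ∀ w : ℝ → ℂ, IsCauchySolution n M N w →
            ∀ i < n, ∀ ξ : ℝ, 0 ≤ ξ →
              ‖iteratedDeriv i w ξ‖ ≤ Ct * (1 + ξ ^ (n - 1)) * Real.exp (maxReRoots n M * ξ))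
    (Ca Cw : ℝ) (hCa : 0 ≤ Ca) (hCw : 0 ≤ Cw) :
    ∃ Ct : ℝ, 0 ≤ Ct ∧
      ∀ (M N : Fin (n+1) → ℂ), (∀ j, ‖M j‖ ≤ Ca) → (∀ j, ‖N j‖ ≤ Cw) →
        ∀ w : ℝ → ℂ, IsCauchySolution (n+1) M N w →
          ∀ i < n+1, ∀ ξ : ℝ, 0 ≤ ξ →
            ‖iteratedDeriv i w ξ‖ ≤
              Ct * (1 + ξ ^ (n+1-1)) * Real.exp (maxReRoots (n+1) M * ξ) := by
  set L : ℝ := max 1 ((n + 1 : ℝ) * Ca) with hLdef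
  have hL1 : (1:ℝ) ≤ L := le_max_left _ _
  have hL0 : (0:ℝ) ≤ L := by linarith
  set Ca1 : ℝ := max Ca 1 with hCa1def
  have hCa1 : (0:ℝ) ≤ Ca1 := le_trans hCa (le_max_left _ _)
  set Cq : ℝ := (Ca1 + 1) * (L + 1) ^ n with hCqdef
  have hCq0 : 0 ≤ Cq := by positivity
  set Cw' : ℝ := (1 + L) * Cw with hCw'def
  have hCw'0 : 0 ≤ Cw' := by positivity
  obtain ⟨K, hK0, hK⟩ := IH Cq Cw' hCq0 hCw'0
  set D : ℝ := Cw + 2 * K with hDdef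
  have hD0 : 0 ≤ D := by positivity
  refine ⟨D * (L + 1) ^ n, by positivity, ?_⟩
  intro M N hM hN w hw i hi ξ hξ
  have hPm : (charPoly (n+1) M).Monic := charPoly_monic _ (by omega) M
  have hPd : (charPoly (n+1) M).natDegree = n + 1 := charPoly_natDegree _ (by omega) M
  obtain ⟨lam, hlam_mem, hlam_re, hlam_max⟩ := exists_max_root (n+1) (by omega) M
  set Lam : ℝ := maxReRoots (n+1) M with hLamdef
  have hlamL : ‖lam‖ ≤ L := by
    have h := root_norm_le (m := n+1) (by omega) hM hlam_mem
    have hc : ((n+1 : ℕ) : ℝ) * Ca = (n + 1 : ℝ) * Ca := by push_cast; ring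
    rw [hc] at h
    exact h
  obtain ⟨Q, hfact, hQm, hQd⟩ := factor_of_root hPm hPd (mem_roots'.1 hlam_mem).2
  set M' : Fin n → ℂ := fun j => -(Q.coeff j) with hM'def
  have hQeq : charPoly n M' = Q := (eq_charPoly_of_monic hQm hQd).symm
  have hqn : Q.coeff n = 1 := by rw [← hQd]; exact hQm.coeff_natDegree
  have hPc : ∀ k, k < n + 1 → ‖(charPoly (n+1) M).coeff (k+1)‖ ≤ Ca1 := by
    intro k hk
    rw [charPoly_coeff]
    rcases eq_or_lt_of_le (Nat.succ_le_of_lt hk) with hkn | hkn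
    · rw [if_pos hkn, dif_neg (by omega)]
      have h1 : ‖(1:ℂ) - 0‖ = 1 := by norm_num
      rw [h1, hCa1def]
      exact le_max_right Ca 1
    · rw [if_neg (by omega), dif_pos hkn]
      simp only [zero_sub, norm_neg]
      exact (hM _).trans (le_max_left _ _)
  have hM'b : ∀ j, ‖M' j‖ ≤ Cq := by
    intro j
    rw [hM'def]
    simp only [norm_neg]
    exact coeff_bound hCa1 hL0 hfact hQm hQd hPc hlamL _
  have hLam'le : maxReRoots n M' ≤ Lam := by
    apply csSup_le ((rootSet_nonempty n hn M').image Complex.re)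
    rintro x ⟨z, hz, rfl⟩
    apply hlam_max
    rw [Set.mem_setOf_eq, hQeq] at hz
    rw [hfact, roots_mul (by rw [← hfact]; exact hPm.ne_zero)]
    exact Multiset.mem_add.2 (Or.inr hz)
  set u : ℝ → ℂ := fun t => deriv w t - lam * w t with hudef
  have hshift' : ∀ j, j + 1 ≤ n + 1 → ∀ t : ℝ,
      iteratedDeriv j u t = iteratedDeriv (j+1) w t - lam * iteratedDeriv j w t := by
    intro j hj t
    rw [hudef, iteratedDeriv_shift hw.1 lam j hj]
  set N' : Fin n → ℂ := fun j => iteratedDeriv (j : ℕ) u 0 with hN'def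
  have hN'b : ∀ j, ‖N' j‖ ≤ Cw' := by
    intro j
    have h1 : N' j = iteratedDeriv ((j:ℕ)+1) w 0 - lam * iteratedDeriv (j:ℕ) w 0 := by
      rw [hN'def]
      exact hshift' _ (by omega) 0
    have e1 : iteratedDeriv ((j:ℕ)+1) w 0 = N ⟨(j:ℕ)+1, by omega⟩ := hw.2.2 ⟨(j:ℕ)+1, by omega⟩
    have e2 : iteratedDeriv (j:ℕ) w 0 = N ⟨(j:ℕ), by omega⟩ := hw.2.2 ⟨(j:ℕ), by omega⟩
    rw [h1, e1, e2]
    calc ‖N ⟨(j:ℕ)+1, by omega⟩ - lam * N ⟨(j:ℕ), by omega⟩‖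
        ≤ ‖N ⟨(j:ℕ)+1, by omega⟩‖ + ‖lam‖ * ‖N ⟨(j:ℕ), by omega⟩‖ := by
          refine (norm_sub_le _ _).trans ?_
          rw [norm_mul]
      _ ≤ Cw + L * Cw := add_le_add (hN _) (mul_le_mul hlamL (hN _) (norm_nonneg _) hL0)
      _ = Cw' := by rw [hCw'def]; ring
  have hu : IsCauchySolution n M' N' u := by
    refine ⟨?_, ?_, fun j => rfl⟩
    · intro j hj
      rw [hudef, iteratedDeriv_shift hw.1 lam j (by omega)]
      exact (hw.1 (j+1) (by omega)).sub ((hw.1 j (by omega)).const_mul lam)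
    · intro t ht
      rw [hshift' n (by omega) t]
      have hODE := hw.2.1 t ht
      set c : ℕ → ℂ := fun k => iteratedDeriv k w t with hcdef
      have hMP : ∀ j : Fin (n+1), M j = -((charPoly (n+1) M).coeff (j:ℕ)) := by
        intro j
        rw [charPoly_coeff, if_neg (by omega), dif_pos j.isLt]
        simp
      have hLHS : iteratedDeriv (n+1) w t - lam * iteratedDeriv n w t
          = (∑ k ∈ Finset.range (n+1), -((charPoly (n+1) M).coeff k) * c k) - lam * c n := by
        rw [hODE]
        congr 1
        rw [← Fin.sum_univ_eq_sum_range (fun k => -((charPoly (n+1) M).coeff k) * c k) (n+1)]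
        apply Finset.sum_congr rfl
        intro j _
        rw [← hMP j]
      have hRHS : ∑ j : Fin n, M' j * iteratedDeriv (j:ℕ) u t
          = ∑ k ∈ Finset.range n, -(Q.coeff k) * (c (k+1) - lam * c k) := by
        rw [← Fin.sum_univ_eq_sum_range (fun k => -(Q.coeff k) * (c (k+1) - lam * c k)) n]
        apply Finset.sum_congr rfl
        intro j _
        rw [hshift' (j:ℕ) (by omega) t]
      rw [hLHS, hRHS]
      exact ode_identity n (charPoly (n+1) M).coeff Q.coeff lam c
        (coeff_rel hfact) (coeff_rel0 hfact) hqn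
  have hub : ∀ j, j < n → ∀ s : ℝ, 0 ≤ s → ‖iteratedDeriv j u s‖ ≤
      K * (1 + s ^ (n-1)) * Real.exp (maxReRoots n M' * s) :=
    fun j hj s hs => hK M' N' hM'b hN'b u hu j hj s hs
  have hub2 : ∀ j, j < n → ∀ s : ℝ, 0 ≤ s → ‖iteratedDeriv j u s‖ ≤
      2 * K * ((1 + s ^ n) * Real.exp (Lam * s)) := by
    intro j hj s hs
    refine (hub j hj s hs).trans ?_
    have h1 : s ^ (n-1) ≤ 1 + s ^ n := pow_le_one_add_pow hs (by omega)
    have h2 : Real.exp (maxReRoots n M' * s) ≤ Real.exp (Lam * s) :=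
      Real.exp_le_exp.2 (mul_le_mul_of_nonneg_right hLam'le hs)
    have h3 : (0:ℝ) ≤ 1 + s ^ n := by positivity
    have h4 : (0:ℝ) ≤ 1 + s ^ (n-1) := by positivity
    calc K * (1 + s^(n-1)) * Real.exp (maxReRoots n M' * s)
        ≤ K * (2*(1+s^n)) * Real.exp (Lam * s) := by
          have hsn : (0:ℝ) ≤ s ^ n := by positivity
          apply mul_le_mul _ h2 (Real.exp_nonneg _) (by positivity)
          apply mul_le_mul_of_nonneg_left (by linarith) hK0
      _ = 2 * K * ((1 + s^n) * Real.exp (Lam * s)) := by ring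
  have ucont : Continuous u := by
    have hdw : Continuous (deriv w) := by
      rw [← iteratedDeriv_one]
      exact (hw.1 1 (by omega)).continuous
    have hwc : Continuous w := by
      have := hw.1 0 (by omega)
      rw [iteratedDeriv_zero] at this
      exact this.continuous
    rw [hudef]
    exact hdw.sub (continuous_const.mul hwc)
  have hw0b : ∀ s : ℝ, 0 ≤ s → ‖w s‖ ≤ D * ((1 + s ^ n) * Real.exp (Lam * s)) := by
    intro s hs
    have hvdiff : Differentiable ℝ w := by
      have := hw.1 0 (by omega)
      rwa [iteratedDeriv_zero] at this
    have hode : ∀ r : ℝ, 0 ≤ r → deriv w r = lam * w r + u r := by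
      intro r _
      rw [hudef]
      ring
    have hb := expBound hvdiff ucont hode hs
    have hiint : (∫ r in (0:ℝ)..s, Real.exp (-lam.re * r) * ‖u r‖) ≤ K * (s + s^n / n) := by
      have hmono : (∫ r in (0:ℝ)..s, Real.exp (-lam.re * r) * ‖u r‖)
          ≤ ∫ r in (0:ℝ)..s, K * (1 + r^(n-1)) := by
        apply intervalIntegral.integral_mono_on hs
        · exact ((Real.continuous_exp.comp ((continuous_const (y := -lam.re)).mul continuous_id)).mul ucont.norm).intervalIntegrable 0 s
        · exact ((continuous_const.mul ((continuous_const.add (continuous_pow (n-1)))))).intervalIntegrable 0 s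
        · intro r hr
          have hr0 : 0 ≤ r := hr.1
          have h1 := hub 0 (by omega) r hr0
          rw [iteratedDeriv_zero] at h1
          have h2 : Real.exp (-lam.re * r) * ‖u r‖
              ≤ Real.exp (-lam.re * r) * (K * (1+r^(n-1)) * Real.exp (maxReRoots n M' * r)) :=
            mul_le_mul_of_nonneg_left h1 (Real.exp_nonneg _)
          refine h2.trans ?_
          rw [hlam_re]
          have h3 : Real.exp (-Lam * r) * Real.exp (maxReRoots n M' * r) ≤ 1 := by
            rw [← Real.exp_add]
            rw [Real.exp_le_one_iff]
            nlinarith [hLam'le, hr0]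
          calc Real.exp (-Lam * r) * (K * (1+r^(n-1)) * Real.exp (maxReRoots n M' * r))
              = (K * (1+r^(n-1))) * (Real.exp (-Lam * r) * Real.exp (maxReRoots n M' * r)) := by
                ring
            _ ≤ (K * (1+r^(n-1))) * 1 := by
                apply mul_le_mul_of_nonneg_left h3 (by positivity)
            _ = K * (1+r^(n-1)) := mul_one _
      have hcomp : (∫ r in (0:ℝ)..s, K * (1 + r^(n-1))) = K * (s + s^n / n) := by
        rw [intervalIntegral.integral_const_mul]
        congr 1
        rw [intervalIntegral.integral_add intervalIntegrable_const
          ((continuous_pow (n-1)).intervalIntegrable 0 s)]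
        rw [integral_pow, integral_one]
        have hn1 : n - 1 + 1 = n := by omega
        rw [hn1]
        have hd : ((n - 1 : ℕ) : ℝ) + 1 = (n : ℝ) := by
          rw [Nat.cast_sub hn]
          ring
        rw [hd, zero_pow (by omega), sub_zero, sub_zero]
      rw [hcomp] at hmono
      exact hmono
    have hwN : ‖w 0‖ ≤ Cw := by
      have h := hw.2.2 ⟨0, by omega⟩
      rw [show ((⟨0, by omega⟩ : Fin (n+1)) : ℕ) = 0 from rfl, iteratedDeriv_zero] at h
      rw [h]
      exact hN _
    have h1 : s ≤ 1 + s^n := by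
      have := pow_le_one_add_pow hs hn
      rwa [pow_one] at this
    have h2 : s^n / n ≤ s^n := by
      apply div_le_self (by positivity)
      exact_mod_cast hn
    have hsn : (0:ℝ) ≤ s^n := by positivity
    rw [hlam_re] at hb hiint
    calc ‖w s‖ ≤ Real.exp (Lam * s) * (‖w 0‖ + ∫ r in (0:ℝ)..s, Real.exp (-Lam * r) * ‖u r‖) := hb
      _ ≤ Real.exp (Lam * s) * (Cw + K * (s + s^n / n)) := by
          exact mul_le_mul_of_nonneg_left (add_le_add hwN hiint) (Real.exp_nonneg _)
      _ ≤ D * ((1 + s^n) * Real.exp (Lam * s)) := by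
          have hkey : Cw + K * (s + s^n / n) ≤ D * (1 + s^n) := by
            rw [hDdef]
            nlinarith [hK0, hCw, h1, h2, hsn]
          nlinarith [Real.exp_nonneg (Lam * s), hkey,
            mul_le_mul_of_nonneg_left hkey (Real.exp_nonneg (Lam * s))]
  have claim : ∀ j, j ≤ n → ‖iteratedDeriv j w ξ‖
      ≤ D * (L+1)^j * ((1 + ξ^n) * Real.exp (Lam * ξ)) := by
    intro j
    induction j with
    | zero =>
      intro _
      rw [iteratedDeriv_zero, pow_zero, mul_one]
      exact hw0b ξ hξ
    | succ j ihj =>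
      intro hj1
      have hj : j < n := by omega
      have hrew : iteratedDeriv (j+1) w ξ = lam * iteratedDeriv j w ξ + iteratedDeriv j u ξ := by
        rw [hshift' j (by omega) ξ]
        ring
      have h1 := ihj (by omega)
      have h2 := hub2 j hj ξ hξ
      have hE0 : (0:ℝ) ≤ (1+ξ^n) * Real.exp (Lam*ξ) := by positivity
      have hp : (1:ℝ) ≤ (L+1)^j := one_le_pow₀ (by linarith)
      have hkey : 2*K ≤ D * (L+1)^j := by
        have : D ≤ D * (L+1)^j := le_mul_of_one_le_right hD0 hp
        rw [hDdef] at this ⊢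
        linarith
      calc ‖iteratedDeriv (j+1) w ξ‖
          ≤ ‖lam‖ * ‖iteratedDeriv j w ξ‖ + ‖iteratedDeriv j u ξ‖ := by
            rw [hrew]
            refine (norm_add_le _ _).trans ?_
            rw [norm_mul]
        _ ≤ L * (D * (L+1)^j * ((1 + ξ^n) * Real.exp (Lam * ξ)))
            + 2 * K * ((1 + ξ^n) * Real.exp (Lam * ξ)) :=
            add_le_add (mul_le_mul hlamL h1 (norm_nonneg _) hL0) h2
        _ ≤ D * (L+1)^(j+1) * ((1 + ξ^n) * Real.exp (Lam * ξ)) := by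
            rw [pow_succ]
            nlinarith [mul_nonneg (sub_nonneg.2 hkey) hE0, hE0, hD0, hK0]
  have hfin := claim i (by omega)
  refine hfin.trans ?_
  rw [show n + 1 - 1 = n from rfl]
  have hpow : (L+1)^i ≤ (L+1)^n := pow_le_pow_right₀ (by linarith) (by omega)
  have hE0 : (0:ℝ) ≤ (1+ξ^n) * Real.exp (Lam*ξ) := by positivity
  calc D * (L+1)^i * ((1 + ξ^n) * Real.exp (Lam * ξ))
      ≤ D * (L+1)^n * ((1 + ξ^n) * Real.exp (Lam * ξ)) := by
        apply mul_le_mul_of_nonneg_right _ hE0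
        exact mul_le_mul_of_nonneg_left hpow hD0
    _ = D * (L + 1) ^ n * (1 + ξ ^ n) * Real.exp (Lam * ξ) := by ring

/-- uniform exponential-power estimate
`|w^{(i)}(ξ)| ≤ C̃ (1 + ξ^{m-1}) e^{Λ̄_m(M) ξ}` for the solution of the Cauchy problem,
uniformly over coefficients and initial data in bounded boxes. -/
theorem uniform_exp_power_estimate (m : ℕ) (hm : 1 ≤ m) (Ca Cw : ℝ)
    (hCa : 0 ≤ Ca) (hCw : 0 ≤ Cw) :
    ∃ Ct : ℝ, 0 ≤ Ct ∧
      ∀ (M N : Fin m → ℂ), (∀ j, ‖M j‖ ≤ Ca) → (∀ j, ‖N j‖ ≤ Cw) →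
        ∀ w : ℝ → ℂ, IsCauchySolution m M N w →
          ∀ i < m, ∀ ξ : ℝ, 0 ≤ ξ →
            ‖iteratedDeriv i w ξ‖ ≤
              Ct * (1 + ξ ^ (m - 1)) * Real.exp (maxReRoots m M * ξ) := by
  induction m, hm using Nat.le_induction generalizing Ca Cw with
  | base => exact base_case Ca Cw hCa hCw
  | succ n hn ih =>
    exact step_case n hn (fun Ca' Cw' hCa' hCw' => ih Ca' Cw' hCa' hCw') Ca Cw hCa hCw
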